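/- Let R = ℂ[x,x⁻¹,y,y⁻¹], and let A, C ⊆ R be the ℂ-subspaces spanned by the monomials xⁱyʲ with i ≥ 0, j ≥ 0 (A) and with i ∈ ℤ, j ≥ 0 (C). Then for every natural number n, the ℂ-vector space (x⁻ⁿy⁻¹A + C)/(x·y⁻¹A + C) has dimension n + 1 over ℂ. (This is the computation dim M′/M = n+1 for the integral lattice M = (z/w̄)·ℂ[z,w̄] + ℂ[z,w̄,1/z] and its dual in the ⟨x⟩-column of d¹ on the chart U_{σ₄}, showing the corresponding matrix entry is 0 if and only if n is odd.) -/

import Mathlib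

noncomputable section

/-- The Laurent polynomial ring `ℂ[x,x⁻¹,y,y⁻¹]` as the monoid algebra of `ℤ × ℤ` over `ℂ`. -/
abbrev LaurentR : Type := AddMonoidAlgebra ℂ (ℤ × ℤ)

/-- The monomial `xⁱyʲ`. -/
def mono (i j : ℤ) : LaurentR := AddMonoidAlgebra.single (i, j) 1

/-- `x` -/
def xx : LaurentR := mono 1 0
/-- `x⁻¹` -/
def xxInv : LaurentR := mono (-1) 0
/-- `y` -/
def yy : LaurentR := mono 0 1
/-- `y⁻¹` -/
def yyInv : LaurentR := mono 0 (-1)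

/-- `A = ℂ[x,y]`, the ℂ-subspace spanned by monomials `xⁱyʲ` with `i ≥ 0`, `j ≥ 0`. -/
def Asub : Submodule ℂ LaurentR := Submodule.span ℂ {r | ∃ (i : ℕ) (j : ℕ), r = mono i j}
/-- `B = ℂ[x,y,y⁻¹]`, the ℂ-subspace spanned by monomials `xⁱyʲ` with `i ≥ 0`, `j ∈ ℤ`. -/
def Bsub : Submodule ℂ LaurentR := Submodule.span ℂ {r | ∃ (i : ℕ) (j : ℤ), r = mono i j}
/-- `C = ℂ[x,x⁻¹,y]`, the ℂ-subspace spanned by monomials `xⁱyʲ` with `i ∈ ℤ`, `j ≥ 0`. -/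
def Csub : Submodule ℂ LaurentR := Submodule.span ℂ {r | ∃ (i : ℤ) (j : ℕ), r = mono i j}
/-- `ℂ[y,y⁻¹]`, the ℂ-subspace spanned by the monomials `yʲ`, `j ∈ ℤ`. -/
def Dy : Submodule ℂ LaurentR := Submodule.span ℂ {r | ∃ (j : ℤ), r = mono 0 j}
/-- `ℂ[x,x⁻¹]`, the ℂ-subspace spanned by the monomials `xⁱ`, `i ∈ ℤ`. -/
def Dx : Submodule ℂ LaurentR := Submodule.span ℂ {r | ∃ (i : ℤ), r = mono i 0}

/-- `u·L = {u·f : f ∈ L}` as a `ℂ`-submodule of `LaurentR`. -/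
def dil (u : LaurentR) (L : Submodule ℂ LaurentR) : Submodule ℂ LaurentR :=
  L.map (LinearMap.mulLeft ℂ u)

theorem mono_mul (a b c d : ℤ) : mono a b * mono c d = mono (a+c) (b+d) := by
  simp [mono, AddMonoidAlgebra.single_mul_single]

def ev (p : ℤ × ℤ) : LaurentR →ₗ[ℂ] ℂ where
  toFun f := f.coeff p
  map_add' f g := rfl
  map_smul' c f := rfl

theorem ev_mono (p : ℤ × ℤ) (a b : ℤ) : ev p (mono a b) = if (a,b) = p then 1 else 0 := by
  show (Finsupp.single (a,b) (1:ℂ)) p = _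
  simp [Finsupp.single_apply]

theorem xxInv_pow (n : ℕ) : xxInv ^ n = mono (-(n:ℤ)) 0 := by
  induction n with
  | zero => simp [mono, AddMonoidAlgebra.one_def]; rfl
  | succ n ih =>
    rw [pow_succ, ih, xxInv, mono_mul]
    push_cast
    ring_nf

theorem xxInv_pow_mul_yyInv (n : ℕ) : xxInv ^ n * yyInv = mono (-(n:ℤ)) (-1) := by
  rw [xxInv_pow, yyInv, mono_mul]; ring_nf

theorem xx_mul_yyInv : xx * yyInv = mono 1 (-1) := by
  rw [xx, yyInv, mono_mul]; ring_nf

-- M ≤ ker (ev (q, -1)) for q ≤ 0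
theorem M_le_ker (q : ℤ) (hq : q ≤ 0) :
    dil (xx * yyInv) Asub ⊔ Csub ≤ LinearMap.ker (ev (q, -1)) := by
  apply sup_le
  · rw [dil, Submodule.map_le_iff_le_comap, Asub, Submodule.span_le]
    rintro r ⟨i, j, rfl⟩
    simp only [SetLike.mem_coe, Submodule.mem_comap, LinearMap.mem_ker,
      LinearMap.mulLeft_apply, xx_mul_yyInv, mono_mul, ev_mono]
    rw [if_neg]
    rintro h
    rw [Prod.mk.injEq] at h
    rcases h with ⟨h1, h2⟩
    have hj : (j:ℤ) = 0 := by omega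
    omega
  · rw [Csub, Submodule.span_le]
    rintro r ⟨i, j, rfl⟩
    simp only [SetLike.mem_coe, LinearMap.mem_ker, ev_mono]
    rw [if_neg]
    rintro h
    rw [Prod.mk.injEq] at h
    omega


/-- For every `n : ℕ`, the ℂ-vector space
`(x⁻ⁿy⁻¹A + C)/(x·y⁻¹A + C)` has dimension `n + 1` over `ℂ`
(realized as the image of `x⁻ⁿy⁻¹A + C` in `R/(x·y⁻¹A + C)`). -/
theorem stmt_10 (n : ℕ) :
    Module.finrank ℂ
      ↥((dil (xxInv ^ n * yyInv) Asub ⊔ Csub).map (dil (xx * yyInv) Asub ⊔ Csub).mkQ)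
      = n + 1 := by
  set M : Submodule ℂ LaurentR := dil (xx * yyInv) Asub ⊔ Csub with hM
  set f : Fin (n+1) → (LaurentR ⧸ M) := fun k => M.mkQ (mono ((k:ℤ) - n) (-1)) with hf
  -- membership facts
  have hC : ∀ (i : ℤ) (j : ℕ), mono i j ∈ Csub := fun i j =>
    Submodule.subset_span ⟨i, j, rfl⟩
  have hCM : ∀ (i : ℤ) (j : ℕ), mono i j ∈ M := fun i j => Submodule.mem_sup_right (hC i j)
  have hdilM : ∀ (i j : ℕ), mono (1 + i) (-1 + j) ∈ M := by
    intro i j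
    apply Submodule.mem_sup_left
    exact Submodule.mem_map.mpr ⟨mono i j, Submodule.subset_span ⟨i, j, rfl⟩,
      by rw [LinearMap.mulLeft_apply, xx_mul_yyInv, mono_mul]⟩
  -- the image equals the span of range f
  have hspan : (dil (xxInv ^ n * yyInv) Asub ⊔ Csub).map M.mkQ
      = Submodule.span ℂ (Set.range f) := by
    apply le_antisymm
    · rw [Submodule.map_le_iff_le_comap]
      apply sup_le
      · rw [dil, Submodule.map_le_iff_le_comap, Asub, Submodule.span_le]
        rintro r ⟨i, j, rfl⟩
        simp only [SetLike.mem_coe, Submodule.mem_comap, LinearMap.mulLeft_apply,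
          xxInv_pow_mul_yyInv, mono_mul]
        rcases j with _ | j'
        all_goals try simp only [Nat.cast_zero]
        · -- j = 0
          by_cases hi : i ≤ n
          · have : M.mkQ (mono (-(n:ℤ) + i) (-1 + 0)) = f ⟨i, by omega⟩ := by
              simp only [hf]
              congr 1
              norm_num
              ring
            rw [this]
            exact Submodule.subset_span ⟨⟨i, by omega⟩, rfl⟩
          · have : mono (-(n:ℤ) + i) (-1 + 0) ∈ M := by
              have := hdilM (i - n - 1) 0
              convert this using 2 <;> push_cast <;> omega
            rw [Submodule.mkQ_apply, Submodule.Quotient.mk_eq_zero _ |>.mpr this]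
            exact Submodule.zero_mem _
        · have : mono (-(n:ℤ) + i) (-1 + (j'+1:ℕ)) ∈ M := by
            have := hCM (-(n:ℤ) + i) j'
            convert this using 2
            push_cast; ring
          rw [Submodule.mkQ_apply, Submodule.Quotient.mk_eq_zero _ |>.mpr this]
          exact Submodule.zero_mem _
      · rw [Csub, Submodule.span_le]
        rintro r ⟨i, j, rfl⟩
        simp only [SetLike.mem_coe, Submodule.mem_comap]
        rw [Submodule.mkQ_apply, Submodule.Quotient.mk_eq_zero _ |>.mpr (hCM i j)]
        exact Submodule.zero_mem _
    · rw [Submodule.span_le]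
      rintro _ ⟨k, rfl⟩
      refine Submodule.mem_map.mpr ⟨mono ((k:ℤ) - n) (-1), ?_, rfl⟩
      apply Submodule.mem_sup_left
      rw [dil]
      refine Submodule.mem_map.mpr ⟨mono (k:ℕ) 0, Submodule.subset_span ⟨k, 0, rfl⟩, ?_⟩
      rw [LinearMap.mulLeft_apply, xxInv_pow_mul_yyInv, mono_mul]
      norm_num
      ring
  -- linear independence
  have hli : LinearIndependent ℂ f := by
    rw [Fintype.linearIndependent_iff]
    intro g hg k
    have hv : (∑ m, g m • mono ((m:ℤ) - n) (-1)) ∈ M := by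
      rw [← Submodule.Quotient.mk_eq_zero M, ← Submodule.mkQ_apply, map_sum]
      simpa only [map_smul] using hg
    have h0 := M_le_ker ((k:ℤ) - n) (by omega) hv
    rw [LinearMap.mem_ker, map_sum] at h0
    have : ∀ m : Fin (n+1), ev ((k:ℤ) - n, -1) (g m • mono ((m:ℤ) - n) (-1))
        = if m = k then g m else 0 := by
      intro m
      rw [map_smul, ev_mono]
      by_cases hmk : m = k
      · subst hmk; simp
      · rw [if_neg, if_neg hmk]; · simp
        rintro h
        rw [Prod.mk.injEq] at h
        exact hmk (Fin.ext (by omega))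
    rw [Finset.sum_congr rfl (fun m _ => this m), Finset.sum_ite_eq' _ k] at h0
    simpa using h0
  rw [hspan, finrank_span_eq_card hli, Fintype.card_fin]
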